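/- Let a ≤ c be real numbers and b = (a+c)/2. Define A = [[a, b, c], [2a, 2b, 2c]] and B = [[0, 0, 0], [a, c, b]]. If λ < a or λ > c, then the only vector x ∈ (ℝ ∪ {-∞})^3 with A ⊗ x = λ ⊗ B ⊗ x is the trivial vector (all entries -∞). Hence σ(A, B) = [a, c]. -/

import Mathlib

open Finset

/-- Max-plus matrix-vector product over `WithBot ℝ`. -/
def mpMul {n m : ℕ} (A : Fin n → Fin m → WithBot ℝ) (x : Fin m → WithBot ℝ) :
    Fin n → WithBot ℝ :=
  fun i => univ.sup fun j => A i j + x j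

/-- `A = [[a,b,c],[2a,2b,2c]]` with `b = (a+c)/2`, as a `WithBot ℝ` matrix. -/
noncomputable def Amat (a c : ℝ) : Fin 2 → Fin 3 → WithBot ℝ :=
  fun i j => ((![![a, (a + c) / 2, c], ![2 * a, 2 * ((a + c) / 2), 2 * c]] :
    Fin 2 → Fin 3 → ℝ) i j : ℝ)

/-- `B = [[0,0,0],[a,c,b]]` with `b = (a+c)/2`, as a `WithBot ℝ` matrix. -/
noncomputable def Bmat (a c : ℝ) : Fin 2 → Fin 3 → WithBot ℝ :=
  fun i j => ((![![0, 0, 0], ![a, c, (a + c) / 2]] : Fin 2 → Fin 3 → ℝ) i j : ℝ)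

lemma sup3 (f : Fin 3 → WithBot ℝ) : univ.sup f = f 0 ⊔ (f 1 ⊔ f 2) := by
  rw [show (univ : Finset (Fin 3)) = {0,1,2} from rfl]
  simp [sup_assoc]

lemma addSup (u v w : WithBot ℝ) : u + (v ⊔ w) = (u + v) ⊔ (u + w) :=
  (Monotone.map_sup (f := fun y => u + y) (fun _ _ h => add_le_add_right h u) v w)

lemma mem_Icc_of_sol (a c lam : ℝ) (hac : a ≤ c) (x : Fin 3 → WithBot ℝ)
    (hx : ∃ j, x j ≠ ⊥)
    (heq : mpMul (Amat a c) x = fun i => (lam : WithBot ℝ) + mpMul (Bmat a c) x i) :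
    a ≤ lam ∧ lam ≤ c := by
  have h0 := congrFun heq 0
  simp only [mpMul, sup3, Amat, Bmat, Matrix.cons_val_zero, Matrix.cons_val_one,
    Matrix.head_cons, Matrix.cons_val_two, Matrix.tail_cons, WithBot.coe_zero,
    zero_add] at h0
  set S : WithBot ℝ := x 0 ⊔ (x 1 ⊔ x 2) with hS
  obtain ⟨j, hj⟩ := hx
  have hSne : S ≠ ⊥ := by
    intro h
    apply hj
    have h1 : x 0 = ⊥ := le_bot_iff.1 (h ▸ le_sup_left)
    have h2 : x 1 = ⊥ := le_bot_iff.1 (h ▸ le_sup_of_le_right le_sup_left)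
    have h3 : x 2 = ⊥ := le_bot_iff.1 (h ▸ le_sup_of_le_right le_sup_right)
    fin_cases j <;> simp [h1, h2, h3]
  obtain ⟨r, hr⟩ := WithBot.ne_bot_iff_exists.1 hSne
  have hx0 : x 0 ≤ S := le_sup_left
  have hx1 : x 1 ≤ S := le_sup_of_le_right le_sup_left
  have hx2 : x 2 ≤ S := le_sup_of_le_right le_sup_right
  have hlow : (a : WithBot ℝ) + S ≤
      ((a : WithBot ℝ) + x 0) ⊔ ((((((a + c) / 2 : ℝ)) : WithBot ℝ) + x 1) ⊔ ((c : WithBot ℝ) + x 2)) := by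
    have e : (a : WithBot ℝ) + S =
        ((a : WithBot ℝ) + x 0) ⊔ (((a : WithBot ℝ) + x 1) ⊔ ((a : WithBot ℝ) + x 2)) := by
      rw [hS, addSup, addSup]
    rw [e]
    exact sup_le_sup le_rfl (sup_le_sup
      (add_le_add (WithBot.coe_le_coe.2 (by linarith)) le_rfl)
      (add_le_add (WithBot.coe_le_coe.2 hac) le_rfl))
  have hhigh : ((a : WithBot ℝ) + x 0) ⊔ ((((((a + c) / 2 : ℝ)) : WithBot ℝ) + x 1) ⊔ ((c : WithBot ℝ) + x 2)) ≤
      (c : WithBot ℝ) + S :=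
    sup_le (add_le_add (WithBot.coe_le_coe.2 hac) hx0)
      (sup_le (add_le_add (WithBot.coe_le_coe.2 (by linarith)) hx1)
        (add_le_add le_rfl hx2))
  rw [h0] at hlow
  rw [h0] at hhigh
  rw [← hr, ← WithBot.coe_add, ← WithBot.coe_add] at hlow hhigh
  exact ⟨by have := WithBot.coe_le_coe.1 hlow; linarith,
    by have := WithBot.coe_le_coe.1 hhigh; linarith⟩

lemma witness_sol (a c lam : ℝ) (hac : a ≤ c) (h1 : a ≤ lam) (h2 : lam ≤ c) :
    mpMul (Amat a c)
        (fun j => ((![0, lam - (a + c) / 2, 2 * lam - (a + c) / 2 - c] : Fin 3 → ℝ) j : WithBot ℝ)) =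
      fun i => (lam : WithBot ℝ) + mpMul (Bmat a c)
        (fun j => ((![0, lam - (a + c) / 2, 2 * lam - (a + c) / 2 - c] : Fin 3 → ℝ) j : WithBot ℝ)) i := by
  have key0 : (a ⊔ (((a+c)/2 + (lam - (a+c)/2)) ⊔ (c + (2*lam - (a+c)/2 - c)))) =
      lam + (((0:ℝ) + 0) ⊔ ((0 + (lam - (a+c)/2)) ⊔ (0 + (2*lam - (a+c)/2 - c)))) := by
    rcases le_total lam ((a + c) / 2) with h | h
    · rw [sup_eq_left.mpr (show c + (2*lam - (a+c)/2 - c) ≤ (a+c)/2 + (lam - (a+c)/2) by linarith),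
        sup_eq_right.mpr (show a ≤ (a+c)/2 + (lam - (a+c)/2) by linarith),
        sup_eq_left.mpr (show (0:ℝ) + (2*lam - (a+c)/2 - c) ≤ 0 + (lam - (a+c)/2) by linarith),
        sup_eq_left.mpr (show (0:ℝ) + (lam - (a+c)/2) ≤ (0:ℝ) + 0 by linarith)]
      ring
    · rw [sup_eq_right.mpr (show (a+c)/2 + (lam - (a+c)/2) ≤ c + (2*lam - (a+c)/2 - c) by linarith),
        sup_eq_right.mpr (show a ≤ c + (2*lam - (a+c)/2 - c) by linarith),
        sup_eq_left.mpr (show (0:ℝ) + (2*lam - (a+c)/2 - c) ≤ 0 + (lam - (a+c)/2) by linarith),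
        sup_eq_right.mpr (show ((0:ℝ) + 0) ≤ (0:ℝ) + (lam - (a+c)/2) by linarith)]
      ring
  have key1 : ((2*a) ⊔ ((2*((a+c)/2) + (lam - (a+c)/2)) ⊔ (2*c + (2*lam - (a+c)/2 - c)))) =
      lam + ((a + (0:ℝ)) ⊔ ((c + (lam - (a+c)/2)) ⊔ ((a+c)/2 + (2*lam - (a+c)/2 - c)))) := by
    rw [sup_eq_right.mpr (show (2*((a+c)/2) + (lam - (a+c)/2)) ≤ 2*c + (2*lam - (a+c)/2 - c) by linarith)]
    rw [sup_eq_right.mpr (show (2*a:ℝ) ≤ 2*c + (2*lam - (a+c)/2 - c) by linarith)]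
    rw [sup_eq_left.mpr (show ((a+c)/2 + (2*lam - (a+c)/2 - c)) ≤ c + (lam - (a+c)/2) by linarith)]
    rw [sup_eq_right.mpr (show (a + (0:ℝ)) ≤ c + (lam - (a+c)/2) by linarith)]
    ring
  funext i
  simp only [mpMul, sup3]
  fin_cases i
  · show (((a:ℝ) : WithBot ℝ) + ((0:ℝ) : WithBot ℝ)) ⊔
        (((((a+c)/2 : ℝ) : WithBot ℝ) + ((lam - (a+c)/2 : ℝ) : WithBot ℝ)) ⊔
          (((c:ℝ) : WithBot ℝ) + ((2*lam - (a+c)/2 - c : ℝ) : WithBot ℝ))) =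
      (lam : WithBot ℝ) + ((((0:ℝ) : WithBot ℝ) + ((0:ℝ) : WithBot ℝ)) ⊔
        (((((0:ℝ)) : WithBot ℝ) + ((lam - (a+c)/2 : ℝ) : WithBot ℝ)) ⊔
          ((((0:ℝ)) : WithBot ℝ) + ((2*lam - (a+c)/2 - c : ℝ) : WithBot ℝ))))
    rw [← WithBot.coe_add, ← WithBot.coe_add, ← WithBot.coe_add, ← WithBot.coe_add,
      ← WithBot.coe_add, ← WithBot.coe_add, ← WithBot.coe_sup, ← WithBot.coe_sup,
      ← WithBot.coe_sup, ← WithBot.coe_sup, ← WithBot.coe_add, WithBot.coe_eq_coe]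
    rw [add_zero]
    exact key0
  · show ((((2*a:ℝ)) : WithBot ℝ) + ((0:ℝ) : WithBot ℝ)) ⊔
        (((((2*((a+c)/2):ℝ)) : WithBot ℝ) + ((lam - (a+c)/2 : ℝ) : WithBot ℝ)) ⊔
          ((((2*c:ℝ)) : WithBot ℝ) + ((2*lam - (a+c)/2 - c : ℝ) : WithBot ℝ))) =
      (lam : WithBot ℝ) + ((((a:ℝ) : WithBot ℝ) + ((0:ℝ) : WithBot ℝ)) ⊔
        ((((((c:ℝ)) : WithBot ℝ)) + ((lam - (a+c)/2 : ℝ) : WithBot ℝ)) ⊔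
          ((((a+c)/2:ℝ) : WithBot ℝ) + ((2*lam - (a+c)/2 - c : ℝ) : WithBot ℝ))))
    rw [← WithBot.coe_add, ← WithBot.coe_add, ← WithBot.coe_add, ← WithBot.coe_add,
      ← WithBot.coe_add, ← WithBot.coe_add, ← WithBot.coe_sup, ← WithBot.coe_sup,
      ← WithBot.coe_sup, ← WithBot.coe_sup, ← WithBot.coe_add, WithBot.coe_eq_coe]
    rw [add_zero]
    exact key1

/-- If `λ < a` or `λ > c`, the only solution of `A ⊗ x = λ ⊗ B ⊗ x` is trivial;
hence the spectrum `σ(A,B)` equals `[a, c]`. -/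
theorem spectrum_eq_interval (a c : ℝ) (hac : a ≤ c) :
    (∀ lam : ℝ, (lam < a ∨ c < lam) → ∀ x : Fin 3 → WithBot ℝ,
        (mpMul (Amat a c) x = fun i => (lam : WithBot ℝ) + mpMul (Bmat a c) x i) →
        ∀ j, x j = ⊥) ∧
    {lam : ℝ | ∃ x : Fin 3 → WithBot ℝ, (∃ j, x j ≠ ⊥) ∧
        mpMul (Amat a c) x = fun i => (lam : WithBot ℝ) + mpMul (Bmat a c) x i} =
      Set.Icc a c := by
  constructor
  · intro lam hlam x heq j
    by_contra hj
    obtain ⟨hal, hlc⟩ := mem_Icc_of_sol a c lam hac x ⟨j, hj⟩ heq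
    rcases hlam with h | h <;> linarith
  · ext lam
    constructor
    · rintro ⟨x, hx, heq⟩
      exact mem_Icc_of_sol a c lam hac x hx heq
    · rintro ⟨h1, h2⟩
      exact ⟨fun j => ((![0, lam - (a + c) / 2, 2 * lam - (a + c) / 2 - c] : Fin 3 → ℝ) j : WithBot ℝ),
        ⟨0, by simp⟩, witness_sol a c lam hac h1 h2⟩
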